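/- Let A = V Λ V⁻¹ ∈ ℂ^{n×n}, where V is invertible, Λ is diagonal, and ‖Λ‖₂ ≤ 1. Then the Hausdorff distance between the convex hull of the eigenvalues of A and the numerical range W(A) satisfies d_H( conv(Λ(A)), W(A) ) ≤ ‖V‖₂ · ‖(V*V)^{−1/2} − I‖₂ + ‖(V*V)^{1/2} − I‖₂, where (V*V)^{1/2} denotes the unique Hermitian positive semidefinite square root of the Hermitian positive definite matrix V*V and (V*V)^{−1/2} is its inverse. -/

import Mathlib

open Matrix
open scoped ComplexOrder

/-- The linear action of a matrix on Euclidean space. -/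
noncomputable def mvE {m n : ℕ} (M : Matrix (Fin m) (Fin n) ℂ)
    (x : EuclideanSpace ℂ (Fin n)) : EuclideanSpace ℂ (Fin m) :=
  Matrix.toEuclideanLin M x

/-- The numerical range `W(A) = {⟨x, Ax⟩/⟨x, x⟩ : x ≠ 0}` of a matrix `A`. -/
noncomputable def numRange {n : ℕ} (A : Matrix (Fin n) (Fin n) ℂ) : Set ℂ :=
  {z | ∃ x : EuclideanSpace ℂ (Fin n), x ≠ 0 ∧ z = (inner ℂ x (mvE A x) : ℂ) / (inner ℂ x x : ℂ)}

/-- The positive semidefinite square root of a positive semidefinite matrix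
(the definition removed from Mathlib, restated with its old meaning). -/
noncomputable def Matrix.PosSemidef.sqrt {𝕜 : Type*} [RCLike 𝕜] {n : Type*} [Fintype n]
    [DecidableEq n] {A : Matrix n n 𝕜} (hA : A.PosSemidef) : Matrix n n 𝕜 :=
  hA.1.eigenvectorUnitary.1 * diagonal ((↑) ∘ (√·) ∘ hA.1.eigenvalues) *
  (star hA.1.eigenvectorUnitary : Matrix n n 𝕜)

/-- The spectral (ℓ² operator) norm of a complex matrix. -/
noncomputable def specNorm {m n : ℕ} (M : Matrix (Fin m) (Fin n) ℂ) : ℝ :=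
  ‖LinearMap.toContinuousLinearMap (Matrix.toEuclideanLin M)‖

section Aux

open scoped Matrix.Norms.L2Operator

lemma psd_sqrt_mul_self {n : ℕ} {A : Matrix (Fin n) (Fin n) ℂ} (hA : A.PosSemidef) :
    hA.sqrt * hA.sqrt = A := by
  have hu : (star hA.1.eigenvectorUnitary : Matrix (Fin n) (Fin n) ℂ) *
      hA.1.eigenvectorUnitary.1 = 1 :=
    Matrix.mem_unitaryGroup_iff'.mp hA.1.eigenvectorUnitary.2
  have hd : ∀ i, ((↑) ∘ (√·) ∘ hA.1.eigenvalues : Fin n → ℂ) i *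
      ((↑) ∘ (√·) ∘ hA.1.eigenvalues : Fin n → ℂ) i =
      (RCLike.ofReal ∘ hA.1.eigenvalues : Fin n → ℂ) i := by
    intro i
    simp only [Function.comp_apply]
    rw [← Complex.ofReal_mul, Real.mul_self_sqrt (hA.eigenvalues_nonneg i)]
    rfl
  simp only [Matrix.PosSemidef.sqrt]
  rw [show ∀ X Y Z W : Matrix (Fin n) (Fin n) ℂ, X * Y * Z * (X * W * Z) = X * (Y * (Z * X) * W) * Z
    by intros; simp only [mul_assoc]]
  rw [hu, mul_one, diagonal_mul_diagonal]
  conv_rhs => rw [hA.1.spectral_theorem, Unitary.conjStarAlgAut_apply]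
  congr 2
  exact congrArg diagonal (funext hd)

lemma psd_sqrt_conjTranspose {n : ℕ} {A : Matrix (Fin n) (Fin n) ℂ} (hA : A.PosSemidef) :
    hA.sqrt ᴴ = hA.sqrt := by
  simp only [Matrix.PosSemidef.sqrt, conjTranspose_mul, diagonal_conjTranspose, mul_assoc]
  rw [star_eq_conjTranspose, conjTranspose_conjTranspose]
  congr 2
  · congr 1
    funext i
    simp [Function.comp_apply]

lemma specNorm_eq {m n : ℕ} (M : Matrix (Fin m) (Fin n) ℂ) : specNorm M = ‖M‖ := rfl

lemma mvE_apply {m n : ℕ} (M : Matrix (Fin m) (Fin n) ℂ) (x : EuclideanSpace ℂ (Fin n))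
    (i : Fin m) : mvE M x i = M.mulVec x i := rfl

lemma mvE_mul {m n k : ℕ} (M : Matrix (Fin m) (Fin n) ℂ) (N : Matrix (Fin n) (Fin k) ℂ)
    (x : EuclideanSpace ℂ (Fin k)) : mvE (M * N) x = mvE M (mvE N x) := by
  ext i
  simp only [mvE_apply]
  rw [← Matrix.mulVec_mulVec]
  rfl

lemma mvE_one {n : ℕ} (x : EuclideanSpace ℂ (Fin n)) : mvE 1 x = x := by
  ext i
  simp [mvE_apply]

lemma mvE_adj {m n : ℕ} (M : Matrix (Fin m) (Fin n) ℂ) (x : EuclideanSpace ℂ (Fin m))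
    (y : EuclideanSpace ℂ (Fin n)) : (inner ℂ x (mvE M y) : ℂ) = inner ℂ (mvE Mᴴ x) y := by
  rw [mvE, mvE, Matrix.toEuclideanLin_conjTranspose_eq_adjoint, LinearMap.adjoint_inner_left]

lemma inner_euclidean {n : ℕ} (x y : EuclideanSpace ℂ (Fin n)) :
    (inner ℂ x y : ℂ) = ∑ i, (starRingEnd ℂ) (x i) * y i := by
  simp [PiLp.inner_apply, RCLike.inner_apply, mul_comm]

lemma inner_mvE_le {n : ℕ} (M : Matrix (Fin n) (Fin n) ℂ) (x : EuclideanSpace ℂ (Fin n)) :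
    ‖(inner ℂ x (mvE M x) : ℂ)‖ ≤ ‖M‖ * (‖x‖ * ‖x‖) := by
  have h1 : ‖(inner ℂ x (mvE M x) : ℂ)‖ ≤ ‖x‖ * ‖mvE M x‖ := norm_inner_le_norm x _
  have h2 : ‖mvE M x‖ ≤ ‖M‖ * ‖x‖ :=
    (LinearMap.toContinuousLinearMap (Matrix.toEuclideanLin M)).le_opNorm x
  calc ‖(inner ℂ x (mvE M x) : ℂ)‖ ≤ ‖x‖ * ‖mvE M x‖ := h1
    _ ≤ ‖x‖ * (‖M‖ * ‖x‖) := by gcongr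
    _ = ‖M‖ * (‖x‖ * ‖x‖) := by ring

lemma numRange_dist {n : ℕ} (A B : Matrix (Fin n) (Fin n) ℂ) {z : ℂ} (hz : z ∈ numRange A) :
    ∃ w ∈ numRange B, dist z w ≤ ‖A - B‖ := by
  obtain ⟨x, hx, rfl⟩ := hz
  refine ⟨(inner ℂ x (mvE B x) : ℂ) / (inner ℂ x x : ℂ), ⟨x, hx, rfl⟩, ?_⟩
  have hxx : (inner ℂ x x : ℂ) = ((‖x‖ : ℂ))^2 := by
    rw [inner_self_eq_norm_sq_to_K]; rfl
  have hsub : (inner ℂ x (mvE A x) : ℂ) - (inner ℂ x (mvE B x) : ℂ)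
      = (inner ℂ x (mvE (A - B) x) : ℂ) := by
    have : mvE (A - B) x = mvE A x - mvE B x := by
      simp [mvE, map_sub, LinearMap.sub_apply]
    rw [this, inner_sub_right]
  have hxn : (0:ℝ) < ‖x‖ := norm_pos_iff.2 hx
  rw [dist_eq_norm, div_sub_div_same, hsub, hxx, norm_div]
  have : ‖((‖x‖:ℂ))^2‖ = ‖x‖ * ‖x‖ := by
    rw [norm_pow]
    simp [sq]
  rw [this, div_le_iff₀ (by positivity)]
  exact inner_mvE_le _ x

lemma numRange_conj_unitary {n : ℕ} (U D : Matrix (Fin n) (Fin n) ℂ)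
    (hU : Uᴴ * U = 1) (hU' : U * Uᴴ = 1) :
    numRange (U * D * Uᴴ) = numRange D := by
  have adjUy : ∀ y : EuclideanSpace ℂ (Fin n), mvE Uᴴ (mvE U y) = y := by
    intro y; rw [← mvE_mul, hU, mvE_one]
  have adjU'y : ∀ y : EuclideanSpace ℂ (Fin n), mvE U (mvE Uᴴ y) = y := by
    intro y; rw [← mvE_mul, hU', mvE_one]
  have inner_eq : ∀ x : EuclideanSpace ℂ (Fin n),
      (inner ℂ (mvE Uᴴ x) (mvE Uᴴ x) : ℂ) = inner ℂ x x := by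
    intro x
    rw [(mvE_adj U x (mvE Uᴴ x)).symm, adjU'y]
  have key : ∀ x : EuclideanSpace ℂ (Fin n),
      (inner ℂ x (mvE (U * D * Uᴴ) x) : ℂ) = inner ℂ (mvE Uᴴ x) (mvE D (mvE Uᴴ x)) := by
    intro x
    rw [mul_assoc, mvE_mul, mvE_adj U, mvE_mul]
  ext z
  constructor
  · rintro ⟨x, hx, rfl⟩
    refine ⟨mvE Uᴴ x, ?_, ?_⟩
    · intro h
      apply hx
      have := inner_eq x
      rw [h, inner_zero_left] at this
      exact inner_self_eq_zero.mp this.symm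
    · rw [key, inner_eq]
  · rintro ⟨y, hy, rfl⟩
    refine ⟨mvE U y, ?_, ?_⟩
    · intro h
      apply hy
      have : mvE Uᴴ (mvE U y) = 0 := by rw [h]; simp [mvE]
      rwa [adjUy] at this
    · have h2 : (inner ℂ (mvE U y) (mvE U y) : ℂ) = inner ℂ y y := by
        have := (mvE_adj Uᴴ y (mvE U y)).symm
        rw [conjTranspose_conjTranspose] at this
        rw [this, adjUy]
      rw [key, adjUy, h2]

lemma numRange_diagonal {n : ℕ} (d : Fin n → ℂ) :
    numRange (Matrix.diagonal d) = convexHull ℝ (Set.range d) := by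
  ext z
  constructor
  · rintro ⟨y, hy, rfl⟩
    have hnum : (inner ℂ y (mvE (Matrix.diagonal d) y) : ℂ)
        = ∑ i, (Complex.normSq (y i) : ℂ) * d i := by
      rw [inner_euclidean]
      congr 1; funext i
      rw [mvE_apply, Matrix.mulVec_diagonal,
        show (starRingEnd ℂ) (y i) * (d i * y i) = ((starRingEnd ℂ) (y i) * y i) * d i from by
          ring, ← Complex.normSq_eq_conj_mul_self]
    have hden : (inner ℂ y y : ℂ) = ((∑ i, Complex.normSq (y i) : ℝ) : ℂ) := by
      rw [inner_euclidean]
      push_cast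
      congr 1; funext i
      rw [← Complex.normSq_eq_conj_mul_self]
    set w : Fin n → ℝ := fun i => Complex.normSq (y i) with hw
    have hw0 : ∀ i ∈ Finset.univ, 0 ≤ w i := fun i _ => Complex.normSq_nonneg _
    have hwpos : 0 < ∑ i, w i := by
      obtain ⟨j, hj⟩ : ∃ j, y j ≠ 0 := by
        by_contra h
        push_neg at h
        exact hy (PiLp.ext h)
      exact Finset.sum_pos' (fun i _ => Complex.normSq_nonneg _)
        ⟨j, Finset.mem_univ j, by simpa [hw] using Complex.normSq_pos.2 hj⟩
    have := Finset.centerMass_mem_convexHull (Finset.univ) hw0 hwpos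
      (fun i _ => Set.mem_range_self i) (z := d)
    have hcm : Finset.univ.centerMass w d
        = (inner ℂ y (mvE (Matrix.diagonal d) y) : ℂ) / (inner ℂ y y : ℂ) := by
      rw [Finset.centerMass, hnum, hden]
      simp only [Complex.real_smul, Complex.ofReal_inv, hw]
      rw [div_eq_inv_mul]
    rwa [hcm] at this
  · intro hz
    rw [convexHull_range_eq_exists_affineCombination] at hz
    obtain ⟨s, w, hw0, hw1, rfl⟩ := hz
    rw [Finset.affineCombination_eq_linear_combination _ _ _ hw1]
    set y : EuclideanSpace ℂ (Fin n) := WithLp.toLp 2 (fun i => if i ∈ s then (Real.sqrt (w i) : ℂ) else 0)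
      with hy
    have hyne : y ≠ 0 := by
      obtain ⟨j, hjs, hjw⟩ : ∃ j ∈ s, w j ≠ 0 := by
        by_contra h
        push_neg at h
        rw [Finset.sum_eq_zero h] at hw1
        exact one_ne_zero hw1.symm
      intro h
      have : y j = 0 := by rw [h]; rfl
      rw [hy] at this
      simp only [hjs, if_pos] at this
      have : Real.sqrt (w j) = 0 := by exact_mod_cast this
      exact hjw (le_antisymm (Real.sqrt_eq_zero'.mp this) (hw0 j hjs))
    refine ⟨y, hyne, ?_⟩
    have hterm : ∀ i, (starRingEnd ℂ) (y i) * y i = if i ∈ s then ((w i : ℝ) : ℂ) else 0 := by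
      intro i
      by_cases hi : i ∈ s
      · simp only [hy, hi, if_pos, Complex.conj_ofReal, ← Complex.ofReal_mul,
          Real.mul_self_sqrt (hw0 i hi)]
      · simp [hy, hi]
    have hden : (inner ℂ y y : ℂ) = 1 := by
      rw [inner_euclidean, Finset.sum_congr rfl (fun i _ => hterm i), Finset.sum_ite_mem,
        Finset.univ_inter]
      norm_cast
    have hnum : (inner ℂ y (mvE (Matrix.diagonal d) y) : ℂ) = ∑ i ∈ s, w i • d i := by
      rw [inner_euclidean]
      simp only [mvE_apply]
      have hterm2 : ∀ i, (starRingEnd ℂ) (y i) * ((Matrix.diagonal d).mulVec y i)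
          = if i ∈ s then ((w i : ℝ) : ℂ) * d i else 0 := by
        intro i
        rw [Matrix.mulVec_diagonal,
          show (starRingEnd ℂ) (y i) * (d i * y i) = ((starRingEnd ℂ) (y i) * y i) * d i from by
            ring, hterm i]
        by_cases hi : i ∈ s <;> simp [hi]
      rw [Finset.sum_congr rfl (fun i _ => hterm2 i), Finset.sum_ite_mem, Finset.univ_inter]
      exact Finset.sum_congr rfl (fun i _ => Complex.real_smul.symm)
    rw [hnum, hden, div_one]

lemma norm_unitary_mul {n : ℕ} (U X : Matrix (Fin n) (Fin n) ℂ) (hU : Uᴴ * U = 1) :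
    ‖U * X‖ = ‖X‖ := by
  have h : ‖U * X‖ * ‖U * X‖ = ‖X‖ * ‖X‖ := by
    rw [← Matrix.l2_opNorm_conjTranspose_mul_self (U * X), Matrix.conjTranspose_mul,
      mul_assoc, ← mul_assoc Uᴴ, hU, one_mul, Matrix.l2_opNorm_conjTranspose_mul_self]
  exact (mul_self_inj (norm_nonneg _) (norm_nonneg _)).mp h

lemma norm_mul_unitary {n : ℕ} (U X : Matrix (Fin n) (Fin n) ℂ) (hU : Uᴴ * U = 1) :
    ‖X * Uᴴ‖ = ‖X‖ := by
  rw [← Matrix.l2_opNorm_conjTranspose (X * Uᴴ), Matrix.conjTranspose_mul,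
    conjTranspose_conjTranspose, norm_unitary_mul U Xᴴ hU, Matrix.l2_opNorm_conjTranspose]

/-- Let `A = VΛV⁻¹` with `V` invertible, `Λ` diagonal and `‖Λ‖₂ ≤ 1`. Then
`d_H(conv(Λ(A)), W(A)) ≤ ‖V‖₂·‖(V*V)^{−1/2} − I‖₂ + ‖(V*V)^{1/2} − I‖₂`, where `(V*V)^{1/2}`
is the positive semidefinite square root of `V*V`. -/
theorem eigenhull_numrange_bound (n : ℕ) (V : Matrix (Fin n) (Fin n) ℂ) (hV : IsUnit V.det)
    (d : Fin n → ℂ) (hΛ : specNorm (Matrix.diagonal d) ≤ 1)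
    (A : Matrix (Fin n) (Fin n) ℂ) (hA : A = V * Matrix.diagonal d * V⁻¹) :
    Metric.hausdorffDist (convexHull ℝ (spectrum ℂ A)) (numRange A) ≤
      specNorm V * specNorm ((Matrix.posSemidef_conjTranspose_mul_self V).sqrt⁻¹ - 1) +
        specNorm ((Matrix.posSemidef_conjTranspose_mul_self V).sqrt - 1) := by
  classical
  set P := Matrix.posSemidef_conjTranspose_mul_self V with hP
  obtain ⟨S, hSdef⟩ : ∃ S', S' = P.sqrt := ⟨_, rfl⟩
  rw [← hSdef]
  set Λ := Matrix.diagonal d with hΛdef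
  have hSS : S * S = Vᴴ * V := by rw [hSdef]; exact psd_sqrt_mul_self P
  have hSH : Sᴴ = S := by rw [hSdef]; exact psd_sqrt_conjTranspose P
  have hSdet : IsUnit S.det := by
    have h1 : S.det * S.det = Vᴴ.det * V.det := by
      rw [← Matrix.det_mul, hSS, Matrix.det_mul]
    have h2 : IsUnit (S.det * S.det) :=
      h1 ▸ ((Matrix.det_conjTranspose V ▸ hV.star).mul hV)
    exact isUnit_of_mul_isUnit_left h2
  have hSinv : S * S⁻¹ = 1 := Matrix.mul_nonsing_inv S hSdet
  have hSinv' : S⁻¹ * S = 1 := Matrix.nonsing_inv_mul S hSdet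
  set U := V * S⁻¹ with hU
  have hUHU : Uᴴ * U = 1 := by
    rw [hU, Matrix.conjTranspose_mul, Matrix.conjTranspose_nonsing_inv, hSH]
    calc S⁻¹ * Vᴴ * (V * S⁻¹) = S⁻¹ * (Vᴴ * V) * S⁻¹ := by
          simp only [mul_assoc]
      _ = S⁻¹ * (S * S) * S⁻¹ := by rw [hSS]
      _ = (S⁻¹ * S) * (S * S⁻¹) := by simp only [mul_assoc]
      _ = 1 := by rw [hSinv, hSinv', one_mul]
  have hUUH : U * Uᴴ = 1 := mul_eq_one_comm.mp hUHU
  set N := U * Λ * Uᴴ with hN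
  -- spectrum of A
  have hVunit : IsUnit V := (Matrix.isUnit_iff_isUnit_det V).mpr hV
  have hspec : spectrum ℂ A = Set.range d := by
    rw [hA]
    have h1 : V * Λ * V⁻¹ = (hVunit.unit : Matrix (Fin n) (Fin n) ℂ) * Λ *
        ((hVunit.unit⁻¹ : (Matrix (Fin n) (Fin n) ℂ)ˣ) : Matrix (Fin n) (Fin n) ℂ) := by
      rw [Matrix.coe_units_inv]
      rfl
    rw [h1, spectrum.units_conjugate, hΛdef, spectrum_diagonal]
  -- convex hull of spectrum = numRange N
  have hhull : convexHull ℝ (spectrum ℂ A) = numRange N := by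
    rw [hspec, ← numRange_diagonal, hN, numRange_conj_unitary U Λ hUHU hUUH]
  -- A - N
  have hVUS : V = U * S := by
    rw [hU, mul_assoc, hSinv', mul_one]
  have hVinv : V⁻¹ = S⁻¹ * Uᴴ := by
    apply Matrix.inv_eq_right_inv
    rw [hVUS, mul_assoc, ← mul_assoc S, hSinv, one_mul, hUUH]
  have hAN : A - N = U * (S * Λ * S⁻¹ - Λ) * Uᴴ := by
    rw [hA, hVinv, hVUS, hN]
    simp only [Matrix.mul_sub, Matrix.sub_mul, mul_assoc]
  -- norm bound
  have hnormΛ : ‖Λ‖ ≤ 1 := hΛ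
  have hSV : ‖S‖ = ‖V‖ := by
    have h : ‖S‖ * ‖S‖ = ‖V‖ * ‖V‖ := by
      rw [← Matrix.l2_opNorm_conjTranspose_mul_self S, hSH, hSS,
        Matrix.l2_opNorm_conjTranspose_mul_self]
    exact (mul_self_inj (norm_nonneg _) (norm_nonneg _)).mp h
  have hbound : ‖A - N‖ ≤ ‖V‖ * ‖S⁻¹ - 1‖ + ‖S - 1‖ := by
    rw [hAN, mul_assoc, norm_unitary_mul U _ hUHU, norm_mul_unitary U _ hUHU]
    have hdec : S * Λ * S⁻¹ - Λ = S * Λ * (S⁻¹ - 1) + (S - 1) * Λ := by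
      noncomm_ring
    rw [hdec]
    have e0 : ‖S * Λ * (S⁻¹ - 1) + (S - 1) * Λ‖
        ≤ ‖S * Λ * (S⁻¹ - 1)‖ + ‖(S - 1) * Λ‖ := norm_add_le _ _
    have e1 : ‖S * Λ * (S⁻¹ - 1)‖ ≤ ‖S‖ * ‖Λ‖ * ‖S⁻¹ - 1‖ :=
      le_trans (Matrix.l2_opNorm_mul _ _)
        (mul_le_mul_of_nonneg_right (Matrix.l2_opNorm_mul _ _) (norm_nonneg _))
    have e2 : ‖(S - 1) * Λ‖ ≤ ‖S - 1‖ * ‖Λ‖ := Matrix.l2_opNorm_mul _ _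
    have n1 : (0:ℝ) ≤ ‖S⁻¹ - 1‖ := norm_nonneg _
    have n2 : (0:ℝ) ≤ ‖S - 1‖ := norm_nonneg _
    have n3 : (0:ℝ) ≤ ‖S‖ := norm_nonneg _
    have n4 : (0:ℝ) ≤ ‖Λ‖ := norm_nonneg _
    rw [← hSV]
    nlinarith [mul_le_mul_of_nonneg_right hnormΛ n2,
      mul_le_mul_of_nonneg_right (mul_le_mul_of_nonneg_left hnormΛ n3) n1]
  -- conclude
  have hr0 : (0:ℝ) ≤ specNorm V * specNorm (S⁻¹ - 1) + specNorm (S - 1) := by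
    rw [specNorm_eq, specNorm_eq, specNorm_eq]
    positivity
  rw [hhull]
  apply Metric.hausdorffDist_le_of_mem_dist hr0
  · intro z hz
    obtain ⟨w, hw, hd⟩ := numRange_dist N A hz
    refine ⟨w, hw, hd.trans ?_⟩
    rw [norm_sub_rev]
    calc ‖A - N‖ ≤ ‖V‖ * ‖S⁻¹ - 1‖ + ‖S - 1‖ := hbound
      _ = specNorm V * specNorm (S⁻¹ - 1) + specNorm (S - 1) := by
          rw [specNorm_eq, specNorm_eq, specNorm_eq]
  · intro z hz
    obtain ⟨w, hw, hd⟩ := numRange_dist A N hz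
    refine ⟨w, hw, ?_⟩
    refine hd.trans ?_
    calc ‖A - N‖ ≤ ‖V‖ * ‖S⁻¹ - 1‖ + ‖S - 1‖ := hbound
      _ = specNorm V * specNorm (S⁻¹ - 1) + specNorm (S - 1) := by
          rw [specNorm_eq, specNorm_eq, specNorm_eq]

end Aux
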